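/- Perturbation counting correctness: the number of perturbations σ : X → {0,1,⋆} such that f^σ has at least one minimal trap space satisfying a phenotype β equals the number of distinct restrictions to the encoding variables {v^k, v^o : v ∈ X} of minimal trap spaces of the encoding network g that satisfy β, i.e., the cardinality of the image of {m : m minimal trap space of g, m ⊨ β} under restriction to the encoding variables. -/

import Mathlib

/-- A state `s` belongs to the subspace `m` (none = free/⋆). -/
def inSub {V : Type*} (m : V → Option Bool) (s : V → Bool) : Prop :=
  ∀ v b, m v = some b → s v = b

/-- The synchronous update of a Boolean network. -/
def syncUpdate {V : Type*} (f : V → (V → Bool) → Bool) (s : V → Bool) : V → Bool :=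
  fun v => f v s

/-- `m` is a trap space: `S[m]` is closed under the synchronous update. -/
def IsTrapSpace {V : Type*} (f : V → (V → Bool) → Bool) (m : V → Option Bool) : Prop :=
  ∀ s, inSub m s → inSub m (syncUpdate f s)

/-- Boolean expressions over a variable set `V`. -/
inductive BExpr (V : Type*) where
  | const : Bool → BExpr V
  | var : V → BExpr V
  | not : BExpr V → BExpr V
  | and : BExpr V → BExpr V → BExpr V
  | or : BExpr V → BExpr V → BExpr V

/-- Two-valued evaluation of a Boolean expression at a state. -/
def BExpr.eval {V : Type*} : BExpr V → (V → Bool) → Bool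
  | .const b, _ => b
  | .var v, s => s v
  | .not e, s => !(e.eval s)
  | .and e₁ e₂, s => e₁.eval s && e₂.eval s
  | .or e₁ e₂, s => e₁.eval s || e₂.eval s

/-- Minimum w.r.t. the total order 0 <_t ⋆ <_t 1 (⋆ = none). -/
def tmin : Option Bool → Option Bool → Option Bool
  | some false, _ => some false
  | _, some false => some false
  | some true, y => y
  | x, some true => x
  | none, none => none

/-- Maximum w.r.t. the total order 0 <_t ⋆ <_t 1 (⋆ = none). -/
def tmax : Option Bool → Option Bool → Option Bool
  | some true, _ => some true
  | _, some true => some true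
  | some false, y => y
  | x, some false => x
  | none, none => none

/-- Kleene three-valued evaluation of a Boolean expression under a subspace. -/
def BExpr.keval {V : Type*} : BExpr V → (V → Option Bool) → Option Bool
  | .const b, _ => some b
  | .var v, m => m v
  | .not e, m => (e.keval m).map (fun b => !b)
  | .and e₁ e₂, m => tmin (e₁.keval m) (e₂.keval m)
  | .or e₁ e₂, m => tmax (e₁.keval m) (e₂.keval m)

/-- The partial order ≤_s on {0,1,⋆}: x ≤_s y iff x = y or y = ⋆. -/
def leS (x y : Option Bool) : Prop := x = y ∨ y = none

/-- Trap space via the three-valued characterization: m(f_v) ≤_s m(v) for all v. -/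
def IsTrapK {V : Type*} (f : V → BExpr V) (m : V → Option Bool) : Prop :=
  ∀ v, leS ((f v).keval m) (m v)

/-- ≤_s-minimal trap space (three-valued characterization). -/
def IsMinTrapK {V : Type*} (f : V → BExpr V) (m : V → Option Bool) : Prop :=
  IsTrapK f m ∧ ∀ m', IsTrapK f m' → (∀ v, leS (m' v) (m v)) → m' = m

/-- Renaming of variables in a Boolean expression. -/
def BExpr.map {V W : Type*} (φ : V → W) : BExpr V → BExpr W
  | .const b => .const b
  | .var v => .var (φ v)
  | .not e => .not (e.map φ)
  | .and e₁ e₂ => .and (e₁.map φ) (e₂.map φ)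
  | .or e₁ e₂ => .or (e₁.map φ) (e₂.map φ)

/-- Variables of the perturbation-encoding network: original variables plus,
for each perturbable `v ∈ X`, variables `v^k = inr (v, true)` and `v^o = inr (v, false)`. -/
abbrev PVar (V : Type) (X : Finset V) := V ⊕ ({v : V // v ∈ X} × Bool)

/-- The perturbation-encoding network `g` of `f` w.r.t. perturbable set `X`:
`g_{v^k} = v^k`, `g_{v^o} = v^o ∧ ¬v^k`, `g_v = ¬v^k ∧ (v^o ∨ f_v)` for `v ∈ X`,
and `g_u = f_u` otherwise. -/
def pertEnc {V : Type} [DecidableEq V] (f : V → BExpr V) (X : Finset V) :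
    PVar V X → BExpr (PVar V X)
  | .inl v =>
      if h : v ∈ X then
        .and (.not (.var (.inr (⟨v, h⟩, true))))
          (.or (.var (.inr (⟨v, h⟩, false))) ((f v).map .inl))
      else (f v).map .inl
  | .inr (x, true) => .var (.inr (x, true))
  | .inr (x, false) => .and (.var (.inr (x, false))) (.not (.var (.inr (x, true))))

/-- The perturbed network `f^σ`: perturbed variables get the constant `σ(v)`,
unperturbed ones (σ(v) = ⋆) keep `f_v`. -/
def pertNet {V : Type} [DecidableEq V] (f : V → BExpr V) (X : Finset V)
    (σ : {v : V // v ∈ X} → Option Bool) : V → BExpr V := fun v =>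
  if h : v ∈ X then
    match σ ⟨v, h⟩ with
    | some b => .const b
    | none => f v
  else f v

/-- Decode the perturbation from the values of `v^k` and `v^o`:
σ(v) = 1 iff (k,o) = (0,1); σ(v) = 0 iff (k,o) = (1,0); σ(v) = ⋆ iff (k,o) = (0,0). -/
def decodePert (k o : Option Bool) : Option Bool :=
  if k = some false ∧ o = some true then some true
  else if k = some true ∧ o = some false then some false
  else none

/-- A phenotype: a finite conjunction of constraints (v ↔ e) with e ∈ {0,1,⋆};
a subspace satisfies it iff it assigns each constrained variable its value. -/
def SatPhenotype {V : Type} (β : List (V × Option Bool)) (m : V → Option Bool) : Prop :=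
  ∀ p ∈ β, m p.1 = p.2
section PCCAux

theorem leS_refl' (x : Option Bool) : leS x x := Or.inl rfl
theorem leS_none' (x : Option Bool) : leS x none := Or.inr rfl
theorem leS_some' {x : Option Bool} {b : Bool} (h : leS x (some b)) : x = some b := by
  rcases h with h | h
  · exact h
  · exact absurd h (by simp)

instance instDecLeS (x y : Option Bool) : Decidable (leS x y) := by
  unfold leS; infer_instance

theorem tmin_mono' : ∀ a a' b b' : Option Bool,
    leS a a' → leS b b' → leS (tmin a b) (tmin a' b') := by decide
theorem tmax_mono' : ∀ a a' b b' : Option Bool,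
    leS a a' → leS b b' → leS (tmax a b) (tmax a' b') := by decide
theorem mapnot_mono' : ∀ a b : Option Bool,
    leS a b → leS (a.map (fun c => !c)) (b.map (fun c => !c)) := by decide
theorem tminT : ∀ y, tmin (some true) y = y := by decide
theorem tminF : ∀ y, tmin (some false) y = some false := by decide
theorem tminF' : ∀ y, tmin y (some false) = some false := by decide
theorem tmaxT : ∀ y, tmax (some true) y = some true := by decide
theorem tmaxF : ∀ y, tmax (some false) y = y := by decide

theorem keval_mono {V : Type*} (e : BExpr V) {m m' : V → Option Bool}
    (h : ∀ v, leS (m' v) (m v)) : leS (e.keval m') (e.keval m) := by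
  induction e with
  | const b => exact leS_refl' _
  | var v => exact h v
  | not e ih => exact mapnot_mono' _ _ ih
  | and e₁ e₂ ih₁ ih₂ => exact tmin_mono' _ _ _ _ ih₁ ih₂
  | or e₁ e₂ ih₁ ih₂ => exact tmax_mono' _ _ _ _ ih₁ ih₂

theorem keval_map' {V W : Type*} (φ : V → W) (e : BExpr V) (m : W → Option Bool) :
    (e.map φ).keval m = e.keval (fun v => m (φ v)) := by
  induction e <;> simp [BExpr.map, BExpr.keval, *]

theorem update_le {V : Type*} [DecidableEq V] {m : V → Option Bool} {v : V}
    (hv : m v = none) (b : Bool) :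
    ∀ w, leS (Function.update m v (some b) w) (m w) := by
  intro w
  by_cases hw : w = v
  · subst hw; rw [hv, Function.update_self]; exact leS_none' _
  · rw [Function.update_of_ne hw]; exact leS_refl' _

theorem trap_update {V : Type*} [DecidableEq V] (h : V → BExpr V) {m : V → Option Bool}
    (hm : IsTrapK h m) (v : V) (b : Bool) (hv : m v = none)
    (hb : leS ((h v).keval (Function.update m v (some b))) (some b)) :
    IsTrapK h (Function.update m v (some b)) := by
  have hle := update_le hv b
  intro u
  by_cases hu : u = v
  · subst hu; rw [Function.update_self]; exact hb
  · rw [Function.update_of_ne hu]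
    have hmono := keval_mono (h u) hle
    have htu := hm u
    rcases hq : (h u).keval m with _ | c
    · rw [hq] at htu
      have hmu : m u = none := by
        rcases htu with h' | h'
        · exact h'.symm
        · exact h'
      rw [hmu]; exact leS_none' _
    · rw [hq] at hmono htu
      rw [leS_some' hmono]; exact htu

theorem min_fix {V : Type*} [DecidableEq V] {h : V → BExpr V} {m : V → Option Bool}
    (hm : IsMinTrapK h m) {v : V} {b : Bool} (hb : (h v).keval m = some b) :
    m v = some b := by
  have h1 := hm.1 v
  rw [hb] at h1
  rcases h1 with h1 | h1
  · exact h1.symm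
  · exfalso
    have hle := update_le h1 b
    have hb' : (h v).keval (Function.update m v (some b)) = some b := by
      have := keval_mono (h v) hle
      rw [hb] at this; exact leS_some' this
    have htr := trap_update h hm.1 v b h1 (by rw [hb']; exact leS_refl' _)
    have heq := hm.2 _ htr hle
    have hcon := congrFun heq v
    rw [Function.update_self, h1] at hcon
    exact Option.some_ne_none _ hcon

/-- k-value of the encoding of a perturbation value. -/
def encK : Option Bool → Option Bool
  | some true => some false
  | some false => some true
  | none => some false

/-- o-value of the encoding of a perturbation value. -/
def encO : Option Bool → Option Bool
  | some true => some true
  | some false => some false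
  | none => some false

/-- Lift a subspace of the original network together with a perturbation to a
subspace of the encoding network. -/
def encM {V : Type} {X : Finset V} (σ : {v : V // v ∈ X} → Option Bool)
    (n : V → Option Bool) : PVar V X → Option Bool
  | .inl v => n v
  | .inr (x, true) => encK (σ x)
  | .inr (x, false) => encO (σ x)

variable {V : Type} [DecidableEq V] (f : V → BExpr V) (X : Finset V)

theorem keval_g_inl (m : PVar V X → Option Bool) (v : V) (hv : v ∈ X) :
    (pertEnc f X (.inl v)).keval m =
      tmin ((m (.inr (⟨v, hv⟩, true))).map (fun b => !b))
        (tmax (m (.inr (⟨v, hv⟩, false))) ((f v).keval (fun w => m (.inl w)))) := by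
  simp [pertEnc, hv, BExpr.keval, keval_map']

theorem keval_g_inl' (m : PVar V X → Option Bool) (v : V) (hv : v ∉ X) :
    (pertEnc f X (.inl v)).keval m = (f v).keval (fun w => m (.inl w)) := by
  simp [pertEnc, hv, keval_map']

theorem keval_g_o (m : PVar V X → Option Bool) (x : {v : V // v ∈ X}) :
    (pertEnc f X (.inr (x, false))).keval m =
      tmin (m (.inr (x, false))) ((m (.inr (x, true))).map (fun b => !b)) := by
  simp [pertEnc, BExpr.keval]

theorem keval_g_k (m : PVar V X → Option Bool) (x : {v : V // v ∈ X}) :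
    (pertEnc f X (.inr (x, true))).keval m = m (.inr (x, true)) := rfl

theorem trap_lift (σ : {v : V // v ∈ X} → Option Bool) {n : V → Option Bool}
    (hn : IsTrapK (pertNet f X σ) n) : IsTrapK (pertEnc f X) (encM σ n) := by
  intro u
  rcases u with v | ⟨x, b⟩
  · by_cases hv : v ∈ X
    · rw [keval_g_inl f X _ v hv]
      have hfn := hn v
      rcases hσ : σ ⟨v, hv⟩ with _ | b
      · simp only [pertNet, dif_pos hv, hσ] at hfn
        simp only [encM, hσ, encK, encO]
        rw [tmaxF]
        simpa [tminT] using hfn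
      · cases b
        · simp only [pertNet, dif_pos hv, hσ, BExpr.keval] at hfn
          simp only [encM, hσ, encK, encO]
          simpa [tminF] using hfn
        · simp only [pertNet, dif_pos hv, hσ, BExpr.keval] at hfn
          simp only [encM, hσ, encK, encO]
          simpa [tminT, tmaxT] using hfn
    · rw [keval_g_inl' f X _ v hv]
      have hfn := hn v
      simp only [pertNet, dif_neg hv] at hfn
      exact hfn
  · cases b
    · rw [keval_g_o]
      rcases hσ : σ x with _ | b
      · simp only [encM, hσ]; decide
      · cases b <;> (simp only [encM, hσ]; decide)
    · rw [keval_g_k]; exact leS_refl' _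
theorem keval_pertNet_some {σ : {v : V // v ∈ X} → Option Bool} {w : V} (hw : w ∈ X)
    {b : Bool} (hσ : σ ⟨w, hw⟩ = some b) (n : V → Option Bool) :
    (pertNet f X σ w).keval n = some b := by
  simp only [pertNet, dif_pos hw, hσ]
  rfl

theorem keval_pertNet_none {σ : {v : V // v ∈ X} → Option Bool} {w : V} (hw : w ∈ X)
    (hσ : σ ⟨w, hw⟩ = none) (n : V → Option Bool) :
    (pertNet f X σ w).keval n = (f w).keval n := by
  simp only [pertNet, dif_pos hw, hσ]

theorem keval_pertNet_notmem {σ : {v : V // v ∈ X} → Option Bool} {w : V} (hw : w ∉ X)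
    (n : V → Option Bool) :
    (pertNet f X σ w).keval n = (f w).keval n := by
  simp only [pertNet, dif_neg hw]

theorem min_struct {m : PVar V X → Option Bool}
    (hm : IsMinTrapK (pertEnc f X) m) (v : V) (hv : v ∈ X) :
    (m (.inr (⟨v, hv⟩, true)) = some false ∧ m (.inr (⟨v, hv⟩, false)) = some true ∧
      m (.inl v) = some true) ∨
    (m (.inr (⟨v, hv⟩, true)) = some true ∧ m (.inr (⟨v, hv⟩, false)) = some false ∧
      m (.inl v) = some false) ∨
    (m (.inr (⟨v, hv⟩, true)) = some false ∧ m (.inr (⟨v, hv⟩, false)) = some false ∧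
      leS ((f v).keval (fun w => m (.inl w))) (m (.inl v))) := by
  set x : {v : V // v ∈ X} := ⟨v, hv⟩ with hx
  have hkne : m (.inr (x, true)) ≠ none := by
    intro h0
    have hb : leS ((pertEnc f X (.inr (x, true))).keval
        (Function.update m (.inr (x, true)) (some false))) (some false) := by
      rw [keval_g_k, Function.update_self]; exact leS_refl' _
    have htr := trap_update (pertEnc f X) hm.1 (.inr (x, true)) false h0 hb
    have heq := hm.2 _ htr (update_le h0 false)
    have hcon := congrFun heq (Sum.inr (x, true))
    rw [Function.update_self, h0] at hcon
    exact Option.some_ne_none _ hcon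
  have hone : m (.inr (x, false)) ≠ none := by
    intro h0
    have hb : leS ((pertEnc f X (.inr (x, false))).keval
        (Function.update m (.inr (x, false)) (some false))) (some false) := by
      rw [keval_g_o, Function.update_self, tminF]; exact leS_refl' _
    have htr := trap_update (pertEnc f X) hm.1 (.inr (x, false)) false h0 hb
    have heq := hm.2 _ htr (update_le h0 false)
    have hcon := congrFun heq (Sum.inr (x, false))
    rw [Function.update_self, h0] at hcon
    exact Option.some_ne_none _ hcon
  rcases hk : m (.inr (x, true)) with _ | bk
  · exact absurd hk hkne
  rcases ho : m (.inr (x, false)) with _ | bo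
  · exact absurd ho hone
  have hotrap := hm.1 (.inr (x, false))
  rw [keval_g_o, hk, ho] at hotrap
  cases bk
  · cases bo
    · -- (k,o) = (0,0) : unperturbed
      refine Or.inr (Or.inr ⟨rfl, rfl, ?_⟩)
      have hvtrap := hm.1 (.inl v)
      rw [keval_g_inl f X m v hv, ← hx, hk, ho] at hvtrap
      simpa [tminT, tmaxF] using hvtrap
    · -- (k,o) = (0,1) : fixed to 1
      refine Or.inl ⟨rfl, rfl, ?_⟩
      have hone' : (pertEnc f X (.inl v)).keval m = some true := by
        rw [keval_g_inl f X m v hv, ← hx, hk, ho]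
        simp [tminT, tmaxT]
      exact min_fix hm hone'
  · cases bo
    · -- (k,o) = (1,0) : fixed to 0
      refine Or.inr (Or.inl ⟨rfl, rfl, ?_⟩)
      have hzero : (pertEnc f X (.inl v)).keval m = some false := by
        rw [keval_g_inl f X m v hv, ← hx, hk]
        simp [tminF]
      exact min_fix hm hzero
    · -- (k,o) = (1,1) : impossible
      exfalso
      revert hotrap; decide

theorem min_project {m : PVar V X → Option Bool}
    (hm : IsMinTrapK (pertEnc f X) m) :
    ∃ σ : {v : V // v ∈ X} → Option Bool,
      m = encM σ (fun v => m (.inl v)) ∧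
      IsMinTrapK (pertNet f X σ) (fun v => m (.inl v)) := by
  have hmeq : m = encM (fun x => decodePert (m (.inr (x, true))) (m (.inr (x, false))))
      (fun v => m (.inl v)) := by
    funext u
    rcases u with v | ⟨x, b⟩
    · rfl
    · obtain ⟨v, hv⟩ := x
      rcases min_struct f X hm v hv with ⟨hk, ho, _⟩ | ⟨hk, ho, _⟩ | ⟨hk, ho, _⟩ <;>
        (cases b <;> simp only [encM, hk, ho] <;> decide)
  refine ⟨_, hmeq, ?_, ?_⟩
  · -- trap space of the perturbed network
    intro w
    by_cases hw : w ∈ X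
    · rcases min_struct f X hm w hw with ⟨hk, ho, hval⟩ | ⟨hk, ho, hval⟩ | ⟨hk, ho, hval⟩
      · have hσ : decodePert (m (.inr (⟨w, hw⟩, true))) (m (.inr (⟨w, hw⟩, false))) = some true := by
          rw [hk, ho]; decide
        simp only [keval_pertNet_some f X
          (σ := fun x => decodePert (m (.inr (x, true))) (m (.inr (x, false)))) hw hσ, hval]
        exact leS_refl' _
      · have hσ : decodePert (m (.inr (⟨w, hw⟩, true))) (m (.inr (⟨w, hw⟩, false))) = some false := by
          rw [hk, ho]; decide
        simp only [keval_pertNet_some f X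
          (σ := fun x => decodePert (m (.inr (x, true))) (m (.inr (x, false)))) hw hσ, hval]
        exact leS_refl' _
      · have hσ : decodePert (m (.inr (⟨w, hw⟩, true))) (m (.inr (⟨w, hw⟩, false))) = none := by
          rw [hk, ho]; decide
        rw [keval_pertNet_none f X
          (σ := fun x => decodePert (m (.inr (x, true))) (m (.inr (x, false)))) hw hσ]
        exact hval
    · rw [keval_pertNet_notmem f X hw]
      have h1 := hm.1 (.inl w)
      rw [keval_g_inl' f X m w hw] at h1
      exact h1
  · -- minimality
    intro n' hn' hle
    have htr : IsTrapK (pertEnc f X)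
        (encM (fun x => decodePert (m (.inr (x, true))) (m (.inr (x, false)))) n') :=
      trap_lift f X _ hn'
    have hle' : ∀ u, leS
        (encM (fun x => decodePert (m (.inr (x, true))) (m (.inr (x, false)))) n' u) (m u) := by
      intro u
      rcases u with v | ⟨x, b⟩
      · exact hle v
      · conv_rhs => rw [hmeq]
        cases b <;> exact leS_refl' _
    have heq := hm.2 _ htr hle'
    funext w
    exact congrFun heq (Sum.inl w)

theorem min_lift (σ : {v : V // v ∈ X} → Option Bool) {n : V → Option Bool}
    (hn : IsMinTrapK (pertNet f X σ) n) :
    IsMinTrapK (pertEnc f X) (encM σ n) := by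
  constructor
  · exact trap_lift f X σ hn.1
  · intro m' hm' hle
    have hKsome : ∀ y : Option Bool, ∃ b, encK y = some b := by decide
    have hOsome : ∀ y : Option Bool, ∃ b, encO y = some b := by decide
    have hk : ∀ x : {v : V // v ∈ X}, m' (.inr (x, true)) = encK (σ x) := by
      intro x
      obtain ⟨b, hb⟩ := hKsome (σ x)
      have h1 := hle (Sum.inr (x, true))
      rw [show encM σ n (Sum.inr (x, true)) = encK (σ x) from rfl, hb] at h1
      rw [hb]; exact leS_some' h1
    have ho : ∀ x : {v : V // v ∈ X}, m' (.inr (x, false)) = encO (σ x) := by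
      intro x
      obtain ⟨b, hb⟩ := hOsome (σ x)
      have h1 := hle (Sum.inr (x, false))
      rw [show encM σ n (Sum.inr (x, false)) = encO (σ x) from rfl, hb] at h1
      rw [hb]; exact leS_some' h1
    have hn' : IsTrapK (pertNet f X σ) (fun v => m' (.inl v)) := by
      intro w
      by_cases hw : w ∈ X
      · have hg := hm' (.inl w)
        rw [keval_g_inl f X m' w hw, hk ⟨w, hw⟩, ho ⟨w, hw⟩] at hg
        rcases hσ : σ ⟨w, hw⟩ with _ | b
        · rw [keval_pertNet_none f X hw hσ]
          rw [hσ] at hg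
          simpa [encK, encO, tminT, tmaxF] using hg
        · rw [keval_pertNet_some f X hw hσ]
          cases b
          · rw [hσ] at hg
            simpa [encK, encO, tminF] using hg
          · rw [hσ] at hg
            simpa [encK, encO, tminT, tmaxT] using hg
      · rw [keval_pertNet_notmem f X hw]
        have hg := hm' (.inl w)
        rw [keval_g_inl' f X m' w hw] at hg
        exact hg
    have heq := hn.2 _ hn' (fun v => hle (Sum.inl v))
    funext u
    rcases u with v | ⟨x, b⟩
    · exact congrFun heq v
    · cases b
      · exact ho x
      · exact hk x

end PCCAux
/-- Perturbation counting correctness: the number of perturbations σ such that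
`f^σ` has a minimal trap space satisfying the phenotype `β` equals the number of
distinct restrictions to the encoding variables of minimal trap spaces of the
encoding network `g` satisfying `β`. -/
theorem perturbation_counting_correctness {V : Type} [Fintype V] [DecidableEq V]
    (f : V → BExpr V) (X : Finset V) (β : List (V × Option Bool)) :
    Set.ncard {σ : {v : V // v ∈ X} → Option Bool |
        ∃ m : V → Option Bool, IsMinTrapK (pertNet f X σ) m ∧ SatPhenotype β m} =
    Set.ncard
      ((fun (m : PVar V X → Option Bool) (p : {v : V // v ∈ X} × Bool) => m (.inr p)) ''
        {m | IsMinTrapK (pertEnc f X) m ∧ SatPhenotype β (fun v => m (.inl v))}) := by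
  classical
  set A : Set ({v : V // v ∈ X} → Option Bool) :=
    {σ : {v : V // v ∈ X} → Option Bool |
        ∃ m : V → Option Bool, IsMinTrapK (pertNet f X σ) m ∧ SatPhenotype β m} with hA
  set E : ({v : V // v ∈ X} → Option Bool) → ({v : V // v ∈ X} × Bool → Option Bool) :=
    fun σ p => if p.2 then encK (σ p.1) else encO (σ p.1) with hE
  have henc_inj : ∀ y y' : Option Bool, encK y = encK y' → encO y = encO y' → y = y' := by
    decide
  have hEinj : Function.Injective E := by
    intro σ σ' h
    funext x
    have h1 : encK (σ x) = encK (σ' x) := by simpa [hE] using congrFun h (x, true)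
    have h2 : encO (σ x) = encO (σ' x) := by simpa [hE] using congrFun h (x, false)
    exact henc_inj _ _ h1 h2
  have hS : ((fun (m : PVar V X → Option Bool) (p : {v : V // v ∈ X} × Bool) => m (.inr p)) ''
        {m | IsMinTrapK (pertEnc f X) m ∧ SatPhenotype β (fun v => m (.inl v))}) = E '' A := by
    ext r
    constructor
    · rintro ⟨m, ⟨hmmin, hmsat⟩, rfl⟩
      obtain ⟨σ, hmeq, hmin⟩ := min_project f X hmmin
      refine ⟨σ, ⟨fun v => m (.inl v), hmin, hmsat⟩, ?_⟩
      funext p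
      obtain ⟨x, b⟩ := p
      conv_rhs => rw [hmeq]
      cases b <;> rfl
    · rintro ⟨σ, ⟨n, hnmin, hnsat⟩, rfl⟩
      refine ⟨encM σ n, ⟨min_lift f X σ hnmin, hnsat⟩, ?_⟩
      funext p
      obtain ⟨x, b⟩ := p
      cases b <;> rfl
  rw [hS, Set.ncard_image_of_injective A hEinj]
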